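/- Let R be an infinite commutative noetherian domain and M a free R-module of infinite rank μ whose free generators are {g_β : β < μ}. Suppose (M_α : α ≤ σ) is a filtration of M (M_0 = 0, continuous at limits, M_σ = M) with M_{α+1} = M_α + ⟨a_α⟩ and a_α ∉ M_α for all α < σ. Then there exists an R-module homomorphism ψ : M → R with ψ(a_α) ≠ 0 for every α < σ. -/

import Mathlib

open Set Submodule Finsupp

section Aux

/-- A linear order that is well-founded in both directions is finite. -/
lemma stmt14_finite_of_wf {α : Type*} [LinearOrder α] [WellFoundedLT α] [WellFoundedGT α] :
    Finite α := by
  cases isEmpty_or_nonempty α with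
  | inl h => infer_instance
  | inr h =>
    obtain ⟨a, h0, n, hmax, hcov⟩ := exists_covBy_seq_of_wellFoundedLT_wellFoundedGT α
    have key : ∀ x : α, ∃ i : Fin (n+1), a i = x := by
      intro x
      by_contra hx
      push_neg at hx
      have : ∀ i, i ≤ n → a i < x := by
        intro i hi
        induction i with
        | zero =>
          rcases lt_or_ge (a 0) x with h | h
          · exact h
          · exact absurd ((h0 h).antisymm h) (hx ⟨0, Nat.succ_pos n⟩)
        | succ k ih =>
          have hk : a k < x := ih (Nat.le_of_succ_le hi)
          have hc := hcov k (Nat.lt_of_succ_le hi)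
          have : a (k+1) ≤ x := le_of_not_gt (hc.2 hk)
          exact lt_of_le_of_ne this (fun he => hx ⟨k+1, Nat.lt_succ_of_le hi⟩ he)
      exact absurd (hmax (this n le_rfl).le) (not_le_of_gt (this n le_rfl))
    choose f hf using key
    exact Finite.of_surjective (fun i : Fin (n+1) => a i)
      (fun x => ⟨f x, hf x⟩)

variable {R : Type*} [CommRing R] {σ : Type*} [LinearOrder σ]

/-- A submodule contained in an f.g. submodule over a noetherian ring is f.g. -/
lemma stmt14_fg_of_le {M' : Type*} [AddCommGroup M'] [Module R M'] [IsNoetherianRing R]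
    {N P : Submodule R M'} (hN : N.FG) (hPN : P ≤ N) : P.FG := by
  haveI := isNoetherian_of_fg_of_noetherian N hN
  have h1 : (Submodule.comap N.subtype P).FG := IsNoetherian.noetherian _
  have h2 := h1.map N.subtype
  rwa [Submodule.map_comap_subtype, inf_eq_right.mpr hPN] at h2

/-- A transfinitely independent family inside an f.g. module over a noetherian ring
is finite. -/
lemma stmt14_chain_finite {M' : Type*} [AddCommGroup M'] [Module R M'] [IsNoetherianRing R]
    [WellFoundedLT σ] (N : Submodule R M') (hN : N.FG) (t : σ → M') (s : Set σ)
    (h1 : ∀ α ∈ s, t α ∈ N)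
    (h2 : ∀ α ∈ s, t α ∉ span R (t '' {γ | γ ∈ s ∧ γ < α})) : s.Finite := by
  haveI := isNoetherian_of_fg_of_noetherian N hN
  set F : s → Submodule R N := fun x =>
    Submodule.comap N.subtype (span R (t '' {γ | γ ∈ s ∧ γ ≤ (x : σ)})) with hF
  have hmono : StrictMono F := by
    intro x y hxy
    rw [SetLike.lt_iff_le_and_exists]
    constructor
    · apply Submodule.comap_mono
      apply Submodule.span_mono
      apply Set.image_mono
      rintro γ ⟨hγs, hγle⟩
      exact ⟨hγs, hγle.trans hxy.le⟩
    · refine ⟨⟨t (y : σ), h1 _ y.2⟩, ?_, ?_⟩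
      · show t (y : σ) ∈ span R (t '' {γ | γ ∈ s ∧ γ ≤ (y : σ)})
        exact subset_span ⟨(y : σ), ⟨y.2, le_rfl⟩, rfl⟩
      · show ¬ t (y : σ) ∈ span R (t '' {γ | γ ∈ s ∧ γ ≤ (x : σ)})
        intro hmem
        apply h2 (y : σ) y.2
        refine Submodule.span_mono ?_ hmem
        apply Set.image_mono
        rintro γ ⟨hγs, hγle⟩
        exact ⟨hγs, lt_of_le_of_lt hγle hxy⟩
  haveI : WellFoundedGT s := hmono.wellFoundedGT
  haveI : WellFoundedLT s := (Subtype.strictMono_coe _).wellFoundedLT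
  haveI : Finite s := stmt14_finite_of_wf
  exact s.toFinite

end Aux
section Main

variable {R : Type*} [CommRing R] {β : Type*} {σ : Type*} [LinearOrder σ]

/-- Span of the earlier part of the family. -/
noncomputable def stmt14Mlt (A : σ → (β →₀ R)) (α : σ) : Submodule R (β →₀ R) :=
  span R (A '' Set.Iio α)

/-- Indices already "caught" by the coordinate set `B`. -/
def stmt14tau (A : σ → (β →₀ R)) (B : Set β) : Set σ :=
  {α | A α ∈ Finsupp.supported R R B ⊔ stmt14Mlt A α}

/-- `B` is closed: caught indices have support inside `B`. -/
def stmt14Cl (A : σ → (β →₀ R)) (B : Set β) : Prop :=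
  ∀ α ∈ stmt14tau A B, ↑(A α).support ⊆ B

/-- `c` solves all the constraints caught by `B`. -/
def stmt14Sol (c : β → R) (A : σ → (β →₀ R)) (B : Set β) : Prop :=
  ∀ α ∈ stmt14tau A B, Finsupp.linearCombination R c (A α) ≠ 0

lemma stmt14Mlt_mono (A : σ → (β →₀ R)) {γ α : σ} (h : γ ≤ α) :
    stmt14Mlt A γ ≤ stmt14Mlt A α :=
  Submodule.span_mono (Set.image_mono (Set.Iio_subset_Iio h))

lemma stmt14_mem_Mlt (A : σ → (β →₀ R)) {γ α : σ} (h : γ < α) : A γ ∈ stmt14Mlt A α :=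
  subset_span ⟨γ, h, rfl⟩

lemma stmt14tau_mono (A : σ → (β →₀ R)) {B B' : Set β} (h : B ⊆ B') :
    stmt14tau A B ⊆ stmt14tau A B' := fun α hα =>
  SetLike.le_def.1 (sup_le_sup_right (Finsupp.supported_mono h) (stmt14Mlt A α)) hα

lemma stmt14_lc_congr {c c' : β → R} {f : β →₀ R} (h : ∀ j ∈ f.support, c j = c' j) :
    Finsupp.linearCombination R c f = Finsupp.linearCombination R c' f := by
  rw [Finsupp.linearCombination_apply, Finsupp.linearCombination_apply, Finsupp.sum,
    Finsupp.sum]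
  exact Finset.sum_congr rfl fun j hj => by rw [h j hj]

/-- Decomposition of a caught element along a union of coordinate sets. -/
lemma stmt14_mem_tau_union {A : σ → (β →₀ R)} {B C : Set β} {α : σ}
    (h : α ∈ stmt14tau A (B ∪ C)) :
    ∃ y t : β →₀ R, A α = y + t ∧ y ∈ Finsupp.supported R R B ⊔ stmt14Mlt A α ∧
      t ∈ Finsupp.supported R R C := by
  have h' : A α ∈ (Finsupp.supported R R B ⊔ stmt14Mlt A α) ⊔ Finsupp.supported R R C := by
    have := h
    rw [stmt14tau, Set.mem_setOf_eq, Finsupp.supported_union] at this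
    have heq : Finsupp.supported R R B ⊔ Finsupp.supported R R C ⊔ stmt14Mlt A α
        = (Finsupp.supported R R B ⊔ stmt14Mlt A α) ⊔ Finsupp.supported R R C := by
      rw [sup_assoc, sup_comm (Finsupp.supported R R C) (stmt14Mlt A α), ← sup_assoc]
    rwa [heq] at this
  rcases Submodule.mem_sup.1 h' with ⟨y, hy, t, ht, hyt⟩
  exact ⟨y, t, hyt.symm, hy, ht⟩

/-- Transfinite independence of the "new parts" of uncaught constraints. -/
lemma stmt14_indep {A : σ → (β →₀ R)} {B : Set β} (s : Set σ)
    (hs : ∀ α ∈ s, α ∉ stmt14tau A B) (y t : σ → β →₀ R)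
    (hd : ∀ α ∈ s, A α = y α + t α)
    (hy : ∀ α ∈ s, y α ∈ Finsupp.supported R R B ⊔ stmt14Mlt A α) :
    ∀ α ∈ s, t α ∉ span R (t '' {γ | γ ∈ s ∧ γ < α}) := by
  intro α hα hmem
  apply hs α hα
  have hsub : span R (t '' {γ | γ ∈ s ∧ γ < α}) ≤
      Finsupp.supported R R B ⊔ stmt14Mlt A α := by
    rw [Submodule.span_le]
    rintro _ ⟨γ, ⟨hγs, hγlt⟩, rfl⟩
    have h1 : A γ ∈ Finsupp.supported R R B ⊔ stmt14Mlt A α :=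
      Submodule.mem_sup_right (stmt14_mem_Mlt A hγlt)
    have h2 : y γ ∈ Finsupp.supported R R B ⊔ stmt14Mlt A α :=
      sup_le_sup le_rfl (stmt14Mlt_mono A hγlt.le) (hy γ hγs)
    have h3 : t γ = A γ - y γ := by rw [hd γ hγs]; abel
    rw [h3]
    exact sub_mem h1 h2
  show A α ∈ Finsupp.supported R R B ⊔ stmt14Mlt A α
  rw [hd α hα]
  exact add_mem (hy α hα) (hsub hmem)

variable [IsNoetherianRing R] [WellFoundedLT σ]

/-- Constraints whose new part is supported on a fixed finite set form a finite set. -/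
lemma stmt14_fin_stage (t : σ → β →₀ R) (s : Set σ) (F : Finset β)
    (h2 : ∀ α ∈ s, t α ∉ span R (t '' {γ | γ ∈ s ∧ γ < α})) :
    {α | α ∈ s ∧ ↑(t α).support ⊆ (↑F : Set β)}.Finite := by
  set s' := {α | α ∈ s ∧ ↑(t α).support ⊆ (↑F : Set β)}
  have hfg : (Finsupp.supported R R (↑F : Set β)).FG := by
    rw [Finsupp.supported_eq_span_single]
    exact Submodule.fg_span ((F.finite_toSet).image _)
  refine stmt14_chain_finite (Finsupp.supported R R (↑F : Set β)) hfg t s' ?_ ?_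
  · exact fun α hα => (Finsupp.mem_supported R _).2 hα.2
  · intro α hα hmem
    apply h2 α hα.1
    refine Submodule.span_mono ?_ hmem
    apply Set.image_mono
    rintro γ ⟨hγ, hlt⟩
    exact ⟨hγ.1, hlt⟩

/-- A transfinitely independent family supported on a countable coordinate set has
countable index set. -/
lemma stmt14_count (t : σ → β →₀ R) (s : Set σ) (C : Set β) (hC : C.Countable)
    (h1 : ∀ α ∈ s, ↑(t α).support ⊆ C)
    (h2 : ∀ α ∈ s, t α ∉ span R (t '' {γ | γ ∈ s ∧ γ < α})) : s.Countable := by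
  have hsub : s ⊆ ⋃ T ∈ {T : Set β | T.Finite ∧ T ⊆ C}, {α | α ∈ s ∧ ↑(t α).support = T} := by
    intro α hα
    exact Set.mem_biUnion (s := {T : Set β | T.Finite ∧ T ⊆ C})
      (show ((↑(t α).support : Set β)) ∈ _ from ⟨(t α).support.finite_toSet, h1 α hα⟩)
      ⟨hα, rfl⟩
  refine Set.Countable.mono hsub ?_
  refine Set.Countable.biUnion (Set.countable_setOf_finite_subset hC) ?_
  rintro T ⟨hTfin, -⟩
  refine Set.Countable.mono (s₂ := {α | α ∈ s ∧ ↑(t α).support ⊆ (↑hTfin.toFinset : Set β)})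
    ?_ (stmt14_fin_stage t s hTfin.toFinset h2).countable
  rintro α ⟨hαs, hsupp⟩
  exact ⟨hαs, by rw [hsupp]; simp⟩

end Main
section Closure

variable {R : Type*} [CommRing R] {β : Type*} {σ : Type*} [LinearOrder σ]
variable [IsNoetherianRing R] [WellFoundedLT σ]

/-- Enlarging the coordinate set by a countable set catches only countably many
new constraints. -/
lemma stmt14_tau_diff_countable (A : σ → (β →₀ R)) (B E : Set β) (hBE : B ⊆ E)
    (hcount : (E \ B).Countable) :
    (stmt14tau A E \ stmt14tau A B).Countable := by
  classical
  set s := stmt14tau A E \ stmt14tau A B with hs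
  have hchoice : ∀ α, ∃ yt : (β →₀ R) × (β →₀ R), α ∈ s →
      (A α = yt.1 + yt.2 ∧ yt.1 ∈ Finsupp.supported R R B ⊔ stmt14Mlt A α ∧
        yt.2 ∈ Finsupp.supported R R (E \ B)) := by
    intro α
    by_cases ha_mem : α ∈ s
    · have hE : α ∈ stmt14tau A (B ∪ (E \ B)) := by
        rw [Set.union_diff_cancel hBE]; exact ha_mem.1
      obtain ⟨y, t, h1, h2, h3⟩ := stmt14_mem_tau_union hE
      exact ⟨(y, t), fun _ => ⟨h1, h2, h3⟩⟩
    · exact ⟨(0, 0), fun h => absurd h ha_mem⟩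
  choose yt hyt using hchoice
  set y : σ → β →₀ R := fun α => (yt α).1
  set t : σ → β →₀ R := fun α => (yt α).2
  have hindep : ∀ α ∈ s, t α ∉ span R (t '' {γ | γ ∈ s ∧ γ < α}) :=
    stmt14_indep s (fun α hα => hα.2) y t (fun α hα => (hyt α hα).1)
      (fun α hα => (hyt α hα).2.1)
  exact stmt14_count t s (E \ B) hcount
    (fun α hα => (Finsupp.mem_supported R _).1 (hyt α hα).2.2) hindep

/-- Helper: a finite set inside a monotone countable union is inside one term. -/
lemma stmt14_finset_subset_iUnion {D : ℕ → Set β} (hmono : Monotone D) (F : Finset β)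
    (h : ↑F ⊆ ⋃ n, D n) : ∃ n, ↑F ⊆ D n := by
  classical
  have : ∀ j : F, ∃ n, (j : β) ∈ D n := fun j => Set.mem_iUnion.1 (h j.2)
  choose f hf using this
  refine ⟨F.attach.sup f, ?_⟩
  intro j hj
  exact hmono (Finset.le_sup (Finset.mem_attach F ⟨j, hj⟩)) (hf ⟨j, hj⟩)

/-- The closure lemma: any closed set together with a countable set is contained in
a closed set with countable difference. -/
lemma stmt14_closure (A : σ → (β →₀ R)) (B C : Set β) (hB : stmt14Cl A B)
    (hC : C.Countable) :
    ∃ B', B ∪ C ⊆ B' ∧ stmt14Cl A B' ∧ (B' \ B).Countable := by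
  classical
  let D : ℕ → Set β := fun n =>
    Nat.rec (B ∪ C) (fun _ Dn => Dn ∪ ⋃ α ∈ stmt14tau A Dn, ↑(A α).support) n
  have hDsucc : ∀ n, D (n+1) = D n ∪ ⋃ α ∈ stmt14tau A (D n), ↑(A α).support :=
    fun n => rfl
  have hmono : Monotone D := monotone_nat_of_le_succ (fun n => by
    rw [hDsucc]; exact Set.subset_union_left)
  have hBD : ∀ n, B ⊆ D n := fun n =>
    subset_trans (Set.subset_union_left) (hmono (Nat.zero_le n))
  have hcount : ∀ n, (D n \ B).Countable := by
    intro n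
    induction n with
    | zero =>
      refine Set.Countable.mono ?_ hC
      rintro j ⟨hj, hjB⟩
      exact hj.resolve_left hjB
    | succ n ih =>
      have hnew : (stmt14tau A (D n) \ stmt14tau A B).Countable :=
        stmt14_tau_diff_countable A B (D n) (hBD n) ih
      have hsub : D (n+1) \ B ⊆ (D n \ B) ∪
          ⋃ α ∈ (stmt14tau A (D n) \ stmt14tau A B), ↑(A α).support := by
        rintro j ⟨hj, hjB⟩
        rw [hDsucc] at hj
        rcases hj with hj | hj
        · exact Or.inl ⟨hj, hjB⟩
        · rw [Set.mem_iUnion₂] at hj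
          obtain ⟨α, hα, hjα⟩ := hj
          by_cases hαB : α ∈ stmt14tau A B
          · exact absurd (hB α hαB hjα) hjB
          · exact Or.inr (Set.mem_biUnion ⟨hα, hαB⟩ hjα)
      exact Set.Countable.mono hsub
        (ih.union (hnew.biUnion (fun α _ => ((A α).support.finite_toSet).countable)))
  refine ⟨⋃ n, D n, Set.subset_iUnion D 0, ?_, ?_⟩
  · intro α hα
    have hmem : A α ∈ Finsupp.supported R R (⋃ n, D n) ⊔ stmt14Mlt A α := hα
    obtain ⟨y, hy, m, hm, hym⟩ := Submodule.mem_sup.1 hmem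
    obtain ⟨n, hn⟩ := stmt14_finset_subset_iUnion hmono y.support
      ((Finsupp.mem_supported R y).1 hy)
    have hαn : α ∈ stmt14tau A (D n) := by
      show A α ∈ Finsupp.supported R R (D n) ⊔ stmt14Mlt A α
      rw [← hym]
      exact Submodule.add_mem _
        (Submodule.mem_sup_left ((Finsupp.mem_supported R y).2 hn))
        (Submodule.mem_sup_right hm)
    have hsub : ↑(A α).support ⊆ D (n+1) := by
      rw [hDsucc]
      exact fun j hj => Or.inr (Set.mem_biUnion hαn hj)
    exact hsub.trans (Set.subset_iUnion D (n+1))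
  · have : (⋃ n, D n) \ B ⊆ ⋃ n, (D n \ B) := by
      rintro j ⟨hj, hjB⟩
      obtain ⟨n, hn⟩ := Set.mem_iUnion.1 hj
      exact Set.mem_iUnion.2 ⟨n, hn, hjB⟩
    exact Set.Countable.mono this (Set.countable_iUnion hcount)

end Closure
section Extend

variable {R : Type*} [CommRing R] {β : Type*} {σ : Type*} [LinearOrder σ]
variable [IsNoetherianRing R] [IsDomain R] [Infinite R] [WellFoundedLT σ]

/-- The countable extension step: a solution on a closed set extends to any
closed superset with countable difference. -/
lemma stmt14_extend (A : σ → (β →₀ R)) (B B' : Set β) (hBB' : B ⊆ B')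
    (hB : stmt14Cl A B) (hB' : stmt14Cl A B') (hD : (B' \ B).Countable)
    (c : β → R) (hc : stmt14Sol c A B) :
    ∃ c', Set.EqOn c c' B ∧ stmt14Sol c' A B' := by
  classical
  by_cases hDe : B' \ B = ∅
  · have hBeq : B' = B := le_antisymm (Set.diff_eq_empty.1 hDe) hBB'
    exact ⟨c, Set.eqOn_refl c B, by rwa [hBeq]⟩
  obtain ⟨e, he⟩ := hD.exists_eq_range (Set.nonempty_iff_ne_empty.2 hDe)
  have hex : ∀ j ∈ B' \ B, ∃ n, e n = j := by
    intro j hj; rw [he] at hj; exact hj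
  set rk : β → ℕ := fun j => if h : ∃ n, e n = j then Nat.find h else 0 with hrkdef
  have hrk : ∀ j ∈ B' \ B, e (rk j) = j := by
    intro j hj
    have h := hex j hj
    simp only [hrkdef, dif_pos h]
    exact Nat.find_spec h
  set s := stmt14tau A B' \ stmt14tau A B with hsdef
  set u : σ → β →₀ R := fun α => (A α).filter (fun j => j ∈ B) with hu
  set t : σ → β →₀ R := fun α => (A α).filter (fun j => ¬ j ∈ B) with ht
  have hsplit : ∀ α, A α = u α + t α := fun α =>
    (Finsupp.filter_pos_add_filter_neg (A α) _).symm
  have htval : ∀ α j, j ∉ B → t α j = A α j := by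
    intro α j hj
    simp only [ht]
    rw [Finsupp.filter_apply, if_pos hj]
  have htmem : ∀ α j, j ∈ (t α).support ↔ (A α j ≠ 0 ∧ j ∉ B) := by
    intro α j
    rw [Finsupp.mem_support_iff]
    simp only [ht, Finsupp.filter_apply]
    by_cases hjB : j ∈ B <;> simp [hjB]
  have huB : ∀ α, u α ∈ Finsupp.supported R R B := by
    intro α
    rw [Finsupp.mem_supported]
    intro j hj
    have hj' := Finset.mem_coe.1 hj
    simp only [hu, Finsupp.support_filter, Finset.mem_filter] at hj'
    exact hj'.2
  have htsupp : ∀ α ∈ stmt14tau A B', ∀ j ∈ (t α).support, j ∈ B' \ B := by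
    intro α hα j hj
    rw [htmem] at hj
    exact ⟨hB' α hα (Finset.mem_coe.2 (Finsupp.mem_support_iff.2 hj.1)), hj.2⟩
  have hindep : ∀ α ∈ s, t α ∉ span R (t '' {γ | γ ∈ s ∧ γ < α}) :=
    stmt14_indep s (fun α hα => hα.2) u t (fun α _ => hsplit α)
      (fun α _ => Submodule.mem_sup_left (huB α))
  have htne : ∀ α ∈ s, t α ≠ 0 := by
    intro α hα h0
    exact hindep α hα (h0 ▸ Submodule.zero_mem _)
  set Nr : σ → ℕ := fun α => (t α).support.sup rk with hNrdef
  have hrk_le : ∀ α, ∀ j ∈ (t α).support, rk j ≤ Nr α := fun α j hj => Finset.le_sup hj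
  -- choose the support element realizing the maximal rank
  have hjmc : ∀ α, ∃ j, α ∈ s → (j ∈ (t α).support ∧ rk j = Nr α) := by
    intro α
    by_cases hα : α ∈ s
    · have hne : (t α).support.Nonempty := Finsupp.support_nonempty_iff.2 (htne α hα)
      obtain ⟨j, hj, hjs⟩ := Finset.exists_mem_eq_sup (t α).support hne rk
      exact ⟨j, fun _ => ⟨hj, hjs.symm⟩⟩
    · exact ⟨e 0, fun h => absurd h hα⟩
  choose jm hjm using hjmc
  have hjm_mem : ∀ α ∈ s, jm α ∈ (t α).support := fun α hα => (hjm α hα).1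
  have hjm_rk : ∀ α ∈ s, rk (jm α) = Nr α := fun α hα => (hjm α hα).2
  have hjm_D : ∀ α ∈ s, jm α ∈ B' \ B := fun α hα =>
    htsupp α hα.1 (jm α) (hjm_mem α hα)
  have hjm_suppA : ∀ α ∈ s, jm α ∈ (A α).support := by
    intro α hα
    have := (htmem α (jm α)).1 (hjm_mem α hα)
    exact Finsupp.mem_support_iff.2 this.1
  have hjm_uniq : ∀ α ∈ s, ∀ j ∈ (t α).support, rk j = Nr α → j = jm α := by
    intro α hα j hj hrkj
    have hjD : j ∈ B' \ B := htsupp α hα.1 j hj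
    calc j = e (rk j) := (hrk j hjD).symm
      _ = e (rk (jm α)) := by rw [hrkj, hjm_rk α hα]
      _ = jm α := hrk _ (hjm_D α hα)
  have hAjm_ne : ∀ α ∈ s, A α (jm α) ≠ 0 := by
    intro α hα
    exact ((htmem α (jm α)).1 (hjm_mem α hα)).1
  -- stage finiteness
  have hstage : ∀ n, {α | α ∈ s ∧ Nr α = n}.Finite := by
    intro n
    have hsub : {α | α ∈ s ∧ Nr α = n} ⊆
        {α | α ∈ s ∧ ↑(t α).support ⊆ (↑((Finset.range (n+1)).image e) : Set β)} := by
      rintro α ⟨hαs, hn⟩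
      refine ⟨hαs, fun j hj => ?_⟩
      have hj' := Finset.mem_coe.1 hj
      have hjD : j ∈ B' \ B := htsupp α hαs.1 j hj'
      have hle : rk j ≤ n := hn ▸ hrk_le α j hj'
      exact Finset.mem_coe.2 (Finset.mem_image.2
        ⟨rk j, Finset.mem_range.2 (Nat.lt_succ_of_le hle), hrk j hjD⟩)
    exact (stmt14_fin_stage t s _ hindep).subset hsub
  -- generic assignments
  set cw : (ℕ → R) → β → R := fun w j => if j ∈ B then c j else w (rk j) with hcw
  set K : σ → (ℕ → R) → R :=
    fun α w => ∑ j ∈ (A α).support.erase (jm α), A α j * cw w j with hK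
  have hGsplit : ∀ α ∈ s, ∀ w x,
      Finsupp.linearCombination R (cw (Function.update w (Nr α) x)) (A α)
        = K α w + A α (jm α) * x := by
    intro α hα w x
    rw [Finsupp.linearCombination_apply, Finsupp.sum,
      ← Finset.sum_erase_add _ _ (hjm_suppA α hα)]
    congr 1
    · rw [hK]
      refine Finset.sum_congr rfl ?_
      intro j hj
      rw [smul_eq_mul]
      congr 1
      simp only [hcw]
      by_cases hjB : j ∈ B
      · rw [if_pos hjB, if_pos hjB]
      · rw [if_neg hjB, if_neg hjB]
        have hjt : j ∈ (t α).support :=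
          (htmem α j).2 ⟨Finsupp.mem_support_iff.1 (Finset.mem_of_mem_erase hj), hjB⟩
        have hne : rk j ≠ Nr α := by
          intro hrkj
          exact (Finset.ne_of_mem_erase hj) (hjm_uniq α hα j hjt hrkj)
        rw [Function.update_of_ne hne]
    · rw [smul_eq_mul]
      congr 1
      simp only [hcw]
      rw [if_neg (hjm_D α hα).2, hjm_rk α hα, Function.update_self]
  -- the finite bad sets
  set Bad : ℕ → (ℕ → R) → Set R :=
    fun n w => {x | ∃ α, α ∈ s ∧ Nr α = n ∧ K α w + A α (jm α) * x = 0} with hBad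
  have hBadfin : ∀ n w, (Bad n w).Finite := by
    intro n w
    have hsub : Bad n w ⊆
        ⋃ α ∈ {α | α ∈ s ∧ Nr α = n}, {x | K α w + A α (jm α) * x = 0} := by
      rintro x ⟨α, h1, h2, h3⟩
      exact Set.mem_biUnion (⟨h1, h2⟩ : _ ∈ {α | α ∈ s ∧ Nr α = n}) h3
    refine Set.Finite.subset (Set.Finite.biUnion (hstage n) ?_) hsub
    rintro α ⟨hαs, -⟩
    refine Set.Subsingleton.finite ?_
    intro x hx x' hx'
    have h := hx.trans hx'.symm
    have h2 : A α (jm α) * x = A α (jm α) * x' := by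
      have := congrArg (fun z => z - K α w) h
      simpa using this
    exact mul_left_cancel₀ (hAjm_ne α hαs) h2
  set pick : ℕ → (ℕ → R) → R := fun n w => ((hBadfin n w).exists_notMem).choose with hpickdef
  have hpick : ∀ n w, pick n w ∉ Bad n w := fun n w => ((hBadfin n w).exists_notMem).choose_spec
  -- the recursive assignment
  set V : ℕ → ℕ → R := fun n =>
    Nat.rec (fun _ => (0:R)) (fun n Vn => Function.update Vn n (pick n Vn)) n with hV
  have hVsucc : ∀ n, V (n+1) = Function.update (V n) n (pick n (V n)) := fun n => rfl
  set v : ℕ → R := fun n => V (n+1) n with hv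
  have hstab : ∀ n m, m < n → V n m = v m := by
    intro n
    induction n with
    | zero => exact fun m hm => absurd hm (Nat.not_lt_zero m)
    | succ n ih =>
      intro m hm
      rcases Nat.lt_or_ge m n with h | h
      · rw [hVsucc, Function.update_of_ne (Nat.ne_of_lt h), ih m h]
      · have hmn : m = n := le_antisymm (Nat.lt_succ_iff.1 hm) h
        subst hmn
        rfl
  refine ⟨cw v, ?_, ?_⟩
  · intro j hj
    simp only [hcw, if_pos hj]
  · intro α hα
    by_cases hαB : α ∈ stmt14tau A B
    · have hsupp := hB α hαB
      rw [← stmt14_lc_congr (c := c) (c' := cw v)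
        (fun j hj => by simp only [hcw, if_pos (hsupp (Finset.mem_coe.2 hj))])]
      exact hc α hαB
    · have hαs : α ∈ s := ⟨hα, hαB⟩
      have h1 : Finsupp.linearCombination R (cw v) (A α)
          = Finsupp.linearCombination R (cw (V (Nr α + 1))) (A α) := by
        apply stmt14_lc_congr
        intro j hj
        simp only [hcw]
        by_cases hjB : j ∈ B
        · rw [if_pos hjB, if_pos hjB]
        · rw [if_neg hjB, if_neg hjB]
          have hjt : j ∈ (t α).support :=
            (htmem α j).2 ⟨Finsupp.mem_support_iff.1 hj, hjB⟩
          exact (hstab (Nr α + 1) (rk j) (Nat.lt_succ_of_le (hrk_le α j hjt))).symm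
      rw [h1, hVsucc]
      rw [hGsplit α hαs (V (Nr α)) (pick (Nr α) (V (Nr α)))]
      intro h0
      exact hpick (Nr α) (V (Nr α)) ⟨α, hαs, rfl, h0⟩

end Extend
section Final

variable {R : Type*} [CommRing R] {β : Type*} {σ : Type*} [LinearOrder σ]
variable [IsNoetherianRing R] [IsDomain R] [Infinite R] [WellFoundedLT σ]

/-- The main combinatorial statement, in coordinates. -/
lemma stmt14_main (A : σ → (β →₀ R)) (hA : ∀ α, A α ∉ stmt14Mlt A α) :
    ∃ c : β → R, ∀ α, Finsupp.linearCombination R c (A α) ≠ 0 := by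
  classical
  let T := {p : Set β × (β → R) // stmt14Cl A p.1 ∧ stmt14Sol p.2 A p.1}
  letI : Preorder T :=
    { le := fun p q => p.1.1 ⊆ q.1.1 ∧ Set.EqOn p.1.2 q.1.2 p.1.1
      le_refl := fun p => ⟨subset_rfl, Set.eqOn_refl _ _⟩
      le_trans := fun p q r hpq hqr =>
        ⟨hpq.1.trans hqr.1, fun j hj => (hpq.2 hj).trans (hqr.2 (hpq.1 hj))⟩ }
  have htau0 : stmt14tau A (∅ : Set β) = ∅ := by
    apply Set.eq_empty_iff_forall_notMem.2
    intro α hα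
    have : A α ∈ stmt14Mlt A α := by
      have h := hα
      rwa [stmt14tau, Set.mem_setOf_eq, Finsupp.supported_empty, bot_sup_eq] at h
    exact hA α this
  let bot : T := ⟨(∅, fun _ => 0), by
      intro α hα
      rw [htau0] at hα
      exact absurd hα (Set.notMem_empty α), by
      intro α hα
      rw [htau0] at hα
      exact absurd hα (Set.notMem_empty α)⟩
  have hzorn : ∀ ch : Set T, IsChain (· ≤ ·) ch → BddAbove ch := by
    intro ch hch
    rcases ch.eq_empty_or_nonempty with rfl | hne
    · exact ⟨bot, fun p hp => absurd hp (Set.notMem_empty p)⟩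
    set Bstar : Set β := ⋃ p ∈ ch, (p : T).1.1 with hBstar
    set cstar : β → R := fun j =>
      if h : ∃ p : T, p ∈ ch ∧ j ∈ p.1.1 then h.choose.1.2 j else 0 with hcstar
    have hcompat : ∀ p ∈ ch, Set.EqOn (p : T).1.2 cstar (p : T).1.1 := by
      intro p hp j hj
      have h : ∃ q : T, q ∈ ch ∧ j ∈ q.1.1 := ⟨p, hp, hj⟩
      simp only [hcstar, dif_pos h]
      obtain ⟨hq, hjq⟩ := h.choose_spec
      rcases eq_or_ne p h.choose with rfl | hne2
      · rfl
      · rcases hch.total hp hq with hle | hle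
        · exact hle.2 hj
        · exact (hle.2 hjq).symm
    have hfinsub : ∀ F : Finset β, ↑F ⊆ Bstar → ∃ p ∈ ch, (↑F : Set β) ⊆ (p : T).1.1 := by
      intro F
      induction F using Finset.induction_on with
      | empty =>
        intro _
        obtain ⟨p, hp⟩ := hne
        exact ⟨p, hp, by simp⟩
      | @insert j F hjF ih =>
        intro hsub
        have hFsub : (↑F : Set β) ⊆ Bstar := by
          refine subset_trans ?_ hsub
          simp only [Finset.coe_insert]
          exact Set.subset_insert j _
        obtain ⟨p, hp, hpF⟩ := ih hFsub
        have hj : j ∈ Bstar := hsub (by simp)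
        rw [hBstar] at hj
        obtain ⟨q, hq, hjq⟩ := Set.mem_iUnion₂.1 hj
        rcases hch.total hp hq with hle | hle
        · refine ⟨q, hq, ?_⟩
          simp only [Finset.coe_insert]
          exact Set.insert_subset hjq (hpF.trans hle.1)
        · refine ⟨p, hp, ?_⟩
          simp only [Finset.coe_insert]
          exact Set.insert_subset (hle.1 hjq) hpF
    have hdescend : ∀ α ∈ stmt14tau A Bstar, ∃ p ∈ ch, α ∈ stmt14tau A (p : T).1.1 := by
      intro α hα
      have hmem : A α ∈ Finsupp.supported R R Bstar ⊔ stmt14Mlt A α := hα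
      obtain ⟨y, hy, mm, hmm, hym⟩ := Submodule.mem_sup.1 hmem
      obtain ⟨p, hp, hpF⟩ := hfinsub y.support ((Finsupp.mem_supported R y).1 hy)
      refine ⟨p, hp, ?_⟩
      show A α ∈ Finsupp.supported R R (p : T).1.1 ⊔ stmt14Mlt A α
      rw [← hym]
      exact Submodule.add_mem _
        (Submodule.mem_sup_left ((Finsupp.mem_supported R y).2 hpF))
        (Submodule.mem_sup_right hmm)
    refine ⟨⟨(Bstar, cstar), ?_, ?_⟩, ?_⟩
    · intro α hα
      obtain ⟨p, hp, hαp⟩ := hdescend α hα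
      show ↑(A α).support ⊆ Bstar
      exact (p.2.1 α hαp).trans
        (Set.subset_biUnion_of_mem (u := fun q : T => (q : T).1.1) hp)
    · intro α hα
      obtain ⟨p, hp, hαp⟩ := hdescend α hα
      rw [← stmt14_lc_congr (c := p.1.2) (c' := cstar)
        (fun j hj => hcompat p hp (p.2.1 α hαp (Finset.mem_coe.2 hj)))]
      exact p.2.2 α hαp
    · intro p hp
      exact ⟨Set.subset_biUnion_of_mem (u := fun q : T => (q : T).1.1) hp, hcompat p hp⟩
  obtain ⟨m, hm⟩ := zorn_le hzorn
  have huniv : m.1.1 = Set.univ := by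
    by_contra hne2
    obtain ⟨x, hx⟩ : ∃ x, x ∉ m.1.1 := by
      by_contra h
      push_neg at h
      exact hne2 (Set.eq_univ_of_forall h)
    obtain ⟨B', hsub, hB'cl, hB'count⟩ :=
      stmt14_closure A m.1.1 {x} m.2.1 (Set.countable_singleton x)
    have hmB' : m.1.1 ⊆ B' := Set.subset_union_left.trans hsub
    obtain ⟨c', hEq, hSol⟩ := stmt14_extend A m.1.1 B' hmB' m.2.1 hB'cl hB'count m.1.2 m.2.2
    let q : T := ⟨(B', c'), hB'cl, hSol⟩
    have hmq : m ≤ q := ⟨hmB', hEq⟩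
    have hqm := hm hmq
    exact hx (hqm.1 (hsub (Set.mem_union_right _ rfl)))
  refine ⟨m.1.2, fun α => ?_⟩
  have hαm : α ∈ stmt14tau A m.1.1 := by
    rw [huniv]
    show A α ∈ Finsupp.supported R R Set.univ ⊔ stmt14Mlt A α
    rw [Finsupp.supported_univ, top_sup_eq]
    exact Submodule.mem_top
  exact m.2.2 α hαm

end Final

/-- Lemma 2.3 with `z_α = 0`: over an infinite commutative noetherian domain `R`,
let `M` be a free module of infinite rank with a filtration along a well-order
adding one generator `a α` (not lying in the span of the previous ones) at each
step and exhausting `M`. Then there is `ψ : M →ₗ R` with `ψ (a α) ≠ 0` for all `α`. -/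
theorem stmt14 {R : Type*} [CommRing R] [IsDomain R] [IsNoetherianRing R] [Infinite R]
    {M : Type*} [AddCommGroup M] [Module R M]
    {β : Type*} [Infinite β] (b : Module.Basis β R M)
    {σ : Type*} [LinearOrder σ] [WellFoundedLT σ]
    (a : σ → M) (ha : ∀ α, a α ∉ Submodule.span R (a '' Set.Iio α))
    (hcover : Submodule.span R (Set.range a) = ⊤) :
    ∃ ψ : M →ₗ[R] R, ∀ α, ψ (a α) ≠ 0 := by
  classical
  set A : σ → (β →₀ R) := fun α => b.repr (a α) with hAdef
  have hA : ∀ α, A α ∉ stmt14Mlt A α := by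
    intro α hmem
    apply ha α
    have himg : A '' Set.Iio α = ⇑(b.repr : M →ₗ[R] (β →₀ R)) '' (a '' Set.Iio α) := by
      rw [Set.image_image]
      rfl
    have hmem' : (b.repr : M →ₗ[R] (β →₀ R)) (a α) ∈
        span R (⇑(b.repr : M →ₗ[R] (β →₀ R)) '' (a '' Set.Iio α)) := by
      rw [← himg]
      exact hmem
    exact (Submodule.apply_mem_span_image_iff_mem_span
      (f := (b.repr : M →ₗ[R] (β →₀ R))) b.repr.injective).1 hmem'
  obtain ⟨c, hc⟩ := stmt14_main A hA
  refine ⟨(Finsupp.linearCombination R c).comp (b.repr : M →ₗ[R] (β →₀ R)), fun α => ?_⟩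
  simpa using hc α
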